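/- Let 𝔽 be a perfect field of characteristic p > 0 and A = 𝔽[x_{ij} : 1 ≤ i,j ≤ n] the coordinate ring of n×n matrices. Let f ∈ A be the product of all leading principal minors and all trailing principal minors of the generic matrix (x_{ij}) (each minor taken once; the full determinant counted once). Then f^{p-1} ∗ σ₀ is a Frobenius splitting of A compatible with the ideal generated by the determinant, where σ₀ is the standard generator of End_φ(A). -/

import Mathlib

open MvPolynomial Finset

namespace Stmt18Aux

/-! ### Combinatorial heart -/

lemma comb {n : ℕ} {S C : Type*} [Fintype S] [Fintype C]
    (off len : S → ℕ)
    (hb : ∀ s, off s + len s ≤ n)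
    (star : ∀ u v : ℕ, u < n → v < n →
      ∃! s : S, off s ≤ u ∧ u < off s + len s ∧ off s ≤ v ∧ v < off s + len s ∧
        2 * off s + len s = u + v + 1)
    (F : S → C → ℕ → ℕ)
    (hmaps : ∀ s c v, off s ≤ v → v < off s + len s →
      off s ≤ F s c v ∧ F s c v < off s + len s)
    (hinj : ∀ s c v w, off s ≤ v → v < off s + len s → off s ≤ w → w < off s + len s →
      F s c v = F s c w → v = w)
    (hcount : ∀ u v : ℕ, u < n → v < n →
      (∑ s : S, ∑ c : C, if off s ≤ v ∧ v < off s + len s ∧ F s c v = u then 1 else 0)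
        = Fintype.card C) :
    ∀ s c v, off s ≤ v → v < off s + len s → F s c v + v + 1 = 2 * off s + len s := by
  classical
  have key : ∀ m d, n ≤ d + m → ∀ (s : S) (c : C) (u v : ℕ), u ≤ v → v < n → v - u = d →
      off s ≤ u → v < off s + len s →
      ((2 * off s + len s = u + v + 1 → F s c v = u ∧ F s c u = v) ∧
       (2 * off s + len s ≠ u + v + 1 → F s c v ≠ u ∧ F s c u ≠ v)) := by
    intro m
    induction m with
    | zero => intro d hd s c u v huv hvn hdv _ _; exfalso; omega
    | succ m ih =>
      intro d hd s c u v huv hvn hdv hus hvs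
      have hun : u < n := lt_of_le_of_lt huv hvn
      have hblock : ∀ (s' : S), off s' ≤ u → v < off s' + len s' →
          2 * off s' + len s' ≠ u + v + 1 → ∀ c', F s' c' v ≠ u ∧ F s' c' u ≠ v := by
        intro s' hu' hv' hne c'
        have hov : off s' ≤ v := le_trans hu' huv
        have huin : u < off s' + len s' := lt_of_le_of_lt huv hv'
        have hbs := hb s'
        rcases lt_or_gt_of_ne hne with hlt | hgt
        · set u' := 2 * off s' + len s' - 1 - v with hu'def
          have h1 : off s' ≤ u' := by omega
          have h2 : u' < u := by omega
          have h4 : 2 * off s' + len s' = u' + v + 1 := by omega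
          have hIH := (ih (v - u') (by omega) s' c' u' v (by omega) hvn rfl h1 hv').1 h4
          constructor
          · intro hFv
            rw [hFv] at hIH; omega
          · intro hFu
            have := hinj s' c' u u' hu' huin h1 (by omega) (by rw [hFu, hIH.2])
            omega
        · set v' := 2 * off s' + len s' - 1 - u with hv'def
          have h1 : v < v' := by omega
          have h2 : v' < off s' + len s' := by omega
          have h3 : v' < n := by omega
          have h4 : 2 * off s' + len s' = u + v' + 1 := by omega
          have hIH := (ih (v' - u) (by omega) s' c' u v' (by omega) h3 rfl hu' h2).1 h4
          constructor
          · intro hFv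
            have := hinj s' c' v v' hov hv' (le_trans hov (by omega)) h2 (by rw [hFv, hIH.1])
            omega
          · intro hFu
            rw [hFu] at hIH; omega
      refine ⟨?_, fun hne => hblock s hus hvs hne c⟩
      intro hsum
      have husin : u < off s + len s := lt_of_le_of_lt huv hvs
      have hosv : off s ≤ v := le_trans hus huv
      have main : ∀ x y : ℕ, x < n → y < n → off s ≤ y → y < off s + len s →
          2 * off s + len s = x + y + 1 →
          (∀ s'', off s'' ≤ x → x < off s'' + len s'' → off s'' ≤ y → y < off s'' + len s'' →
              2 * off s'' + len s'' ≠ x + y + 1 → ∀ c', F s'' c' y ≠ x) →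
          ∀ c', F s c' y = x := by
        intro x y hxn hyn hoy hyin hsxy hneg c'
        obtain ⟨s₁, hs₁, huniq₁⟩ := star x y hxn hyn
        have hxin : off s ≤ x ∧ x < off s + len s := by omega
        have hss₁ : s = s₁ := huniq₁ s ⟨hxin.1, hxin.2, hoy, hyin, hsxy⟩
        have h1 := hcount x y hxn hyn
        rw [Finset.sum_eq_single_of_mem s (mem_univ s)] at h1
        · have h2 : ∀ c'' ∈ (univ : Finset C),
              (if off s ≤ y ∧ y < off s + len s ∧ F s c'' y = x then 1 else 0) = 1 := by
            refine (Finset.sum_eq_sum_iff_of_le ?_).1 ?_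
            · intro i _; split <;> omega
            · rw [h1]; simp
          have := h2 c' (mem_univ c')
          by_contra hne
          rw [if_neg (by tauto)] at this
          omega
        · intro s'' _ hne''
          refine Finset.sum_eq_zero fun c'' _ => ?_
          rw [if_neg]
          rintro ⟨hb1, hb2, hb3⟩
          have hxin'' : off s'' ≤ x ∧ x < off s'' + len s'' := by
            have := hmaps s'' c'' y hb1 hb2
            omega
          by_cases hsum'' : 2 * off s'' + len s'' = x + y + 1
          · exact hne'' ((huniq₁ s'' ⟨hxin''.1, hxin''.2, hb1, hb2, hsum''⟩).trans hss₁.symm)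
          · exact hneg s'' hxin''.1 hxin''.2 hb1 hb2 hsum'' c'' hb3
      constructor
      · exact main u v hun hvn hosv hvs hsum
          (fun s'' h1 h2 h3 h4 h5 c' => (hblock s'' h1 h4 h5 c').1) c
      · exact main v u hvn hun hus husin (by omega)
          (fun s'' h1 h2 h3 h4 h5 c' => (hblock s'' h3 h2 (by omega) c').2) c
  intro s c v hv1 hv2
  have hbs := hb s
  have hvn : v < n := by omega
  rcases le_or_gt (2 * off s + len s - 1 - v) v with h | h
  · set u := 2 * off s + len s - 1 - v with hu
    have := (key n (v - u) (by omega) s c u v h hvn rfl (by omega) hv2).1 (by omega)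
    omega
  · set w := 2 * off s + len s - 1 - v with hw
    have := (key n (w - v) (by omega) s c v w (by omega) (by omega) rfl hv1 (by omega)).1 (by omega)
    omega

/-! ### The family of blocks -/

def fincl (n a L : ℕ) (h : a + L ≤ n) (i : Fin L) : Fin n := ⟨a + i, by omega⟩

@[simp] lemma fincl_val {n a L h} (i : Fin L) : (fincl n a L h i : ℕ) = a + i := rfl

abbrev SS (n : ℕ) := Fin n ⊕ Fin (n - 1)

def off {n : ℕ} (s : SS n) : ℕ :=
  Sum.elim (fun _ => 0) (fun k : Fin (n-1) => n - ((k : ℕ) + 1)) s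
def len {n : ℕ} (s : SS n) : ℕ :=
  Sum.elim (fun k : Fin n => (k : ℕ) + 1) (fun k : Fin (n-1) => (k : ℕ) + 1) s

@[simp] lemma off_inl {n} (k : Fin n) : off (Sum.inl k : SS n) = 0 := rfl
@[simp] lemma off_inr {n} (k : Fin (n-1)) : off (Sum.inr k : SS n) = n - ((k:ℕ)+1) := rfl
@[simp] lemma len_inl {n} (k : Fin n) : len (Sum.inl k : SS n) = (k:ℕ)+1 := rfl
@[simp] lemma len_inr {n} (k : Fin (n-1)) : len (Sum.inr k : SS n) = (k:ℕ)+1 := rfl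

lemma off_len_le {n : ℕ} (s : SS n) : off s + len s ≤ n := by
  cases s with
  | inl k => have := k.isLt; simp
  | inr k => have := k.isLt; simp; omega

lemma star (n : ℕ) (u v : ℕ) (hu : u < n) (hv : v < n) :
    ∃! s : SS n, off s ≤ u ∧ u < off s + len s ∧ off s ≤ v ∧ v < off s + len s ∧
      2 * off s + len s = u + v + 1 := by
  rcases le_or_gt (u + v + 1) n with h | h
  · refine ⟨Sum.inl ⟨u + v, by omega⟩, ?_, ?_⟩
    · refine ⟨?_, ?_, ?_, ?_, ?_⟩ <;> simp <;> omega
    · rintro (⟨k, hk⟩ | ⟨k, hk⟩) hcond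
      · simp only [off_inl, len_inl] at hcond
        have : k = u + v := by omega
        subst this; rfl
      · simp only [off_inr, len_inr] at hcond
        exfalso; omega
  · have hn1 : 1 ≤ n := by omega
    refine ⟨Sum.inr ⟨2 * n - (u + v) - 2, by omega⟩, ?_, ?_⟩
    · refine ⟨?_, ?_, ?_, ?_, ?_⟩ <;> simp <;> omega
    · rintro (⟨k, hk⟩ | ⟨k, hk⟩) hcond
      · simp only [off_inl, len_inl] at hcond
        exfalso; omega
      · simp only [off_inr, len_inr] at hcond
        have : k = 2 * n - (u + v) - 2 := by omega
        subst this; rfl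

lemma sumlen (n : ℕ) : (∑ s : SS n, len s) = n * n := by
  rw [Fintype.sum_sum_type]
  simp only [len_inl, len_inr]
  induction n with
  | zero => simp
  | succ m ihm =>
    cases m with
    | zero => simp
    | succ m' =>
      rw [Fin.sum_univ_castSucc (fun k : Fin (m'+2) => (k:ℕ)+1)]
      rw [show ((m'+1+1) - 1) = m' + 1 from rfl]
      rw [Fin.sum_univ_castSucc (fun k : Fin (m'+1) => (k:ℕ)+1)]
      have hm : (m' + 1) - 1 = m' := rfl
      rw [hm] at ihm
      simp only [Fin.coe_castSucc, Fin.val_last] at ihm ⊢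
      nlinarith [ihm]

/-! ### Polynomial expansion -/

variable {𝔽 : Type*} [Field 𝔽]

lemma prod_X_monomial {ι κ : Type*} (s : Finset ι) (g : ι → κ) :
    (∏ i ∈ s, (X (g i) : MvPolynomial κ 𝔽)) =
      monomial (∑ i ∈ s, Finsupp.single (g i) 1) 1 := by
  classical
  induction s using Finset.cons_induction with
  | empty => simp
  | cons a s ha ih =>
    rw [Finset.prod_cons, Finset.sum_cons, ih, X, monomial_mul, one_mul]

lemma prod_monomial {ι κ : Type*} (s : Finset ι) (g : ι → κ →₀ ℕ) (c : ι → 𝔽) :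
    (∏ i ∈ s, (monomial (g i) (c i) : MvPolynomial κ 𝔽)) =
      monomial (∑ i ∈ s, g i) (∏ i ∈ s, c i) := by
  classical
  induction s using Finset.cons_induction with
  | empty => simp
  | cons a s ha ih =>
    rw [Finset.prod_cons, Finset.sum_cons, Finset.prod_cons, ih, monomial_mul]

lemma det_X {ι κ : Type*} [DecidableEq ι] [Fintype ι] (g : ι → ι → κ) :
    (Matrix.of fun i j : ι => (X (g i j) : MvPolynomial κ 𝔽)).det =
      ∑ σ : Equiv.Perm ι,
        monomial (∑ i : ι, Finsupp.single (g (σ i) i) 1) (((Equiv.Perm.sign σ : ℤ) : 𝔽)) := by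
  rw [Matrix.det_apply]
  refine Finset.sum_congr rfl fun σ _ => ?_
  have : (∏ i : ι, Matrix.of (fun i j => (X (g i j) : MvPolynomial κ 𝔽)) (σ i) i)
      = monomial (∑ i : ι, Finsupp.single (g (σ i) i) 1) 1 := by
    rw [← prod_X_monomial]
    rfl
  rw [this, Units.smul_def, zsmul_eq_mul]
  rw [show ((Equiv.Perm.sign σ : ℤ) : MvPolynomial κ 𝔽) = C ((Equiv.Perm.sign σ : ℤ) : 𝔽) by
    rfl]
  rw [C_mul_monomial, mul_one]

noncomputable def blk (𝔽 : Type*) [Field 𝔽] {n : ℕ} (s : SS n) :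
    MvPolynomial (Fin n × Fin n) 𝔽 :=
  Matrix.det (Matrix.of fun i j : Fin (len s) =>
    X (fincl n (off s) (len s) (off_len_le s) i, fincl n (off s) (len s) (off_len_le s) j))

abbrev PT (n p : ℕ) := ∀ _t : SS n × Fin (p - 1), Equiv.Perm (Fin (len _t.1))

noncomputable def Exp {n : ℕ} (p : ℕ) (τ : PT n p) : (Fin n × Fin n) →₀ ℕ :=
  ∑ t : SS n × Fin (p-1), ∑ i : Fin (len t.1),
    Finsupp.single (fincl n (off t.1) (len t.1) (off_len_le t.1) ((τ t) i),
                    fincl n (off t.1) (len t.1) (off_len_le t.1) i) 1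

lemma Exp_eq {n p : ℕ} (τ : PT n p) : Exp p τ =
    ∑ s : SS n, ∑ c : Fin (p-1), ∑ i : Fin (len s),
      Finsupp.single (fincl n (off s) (len s) (off_len_le s) ((τ (s,c)) i),
                      fincl n (off s) (len s) (off_len_le s) i) 1 := by
  rw [Exp]; exact Fintype.sum_prod_type _

noncomputable def sgn (𝔽 : Type*) [Field 𝔽] {n : ℕ} (p : ℕ) (τ : PT n p) : 𝔽 :=
  ∏ t : SS n × Fin (p-1), ((Equiv.Perm.sign (τ t) : ℤ) : 𝔽)

lemma expand (n p : ℕ) :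
    ((∏ s : SS n, blk 𝔽 s) ^ (p - 1)) =
      ∑ τ : PT n p, monomial (Exp p τ) (sgn 𝔽 p τ) := by
  classical
  calc ((∏ s : SS n, blk 𝔽 s) ^ (p - 1))
      = ∏ s : SS n, (blk 𝔽 s) ^ (p-1) := by rw [Finset.prod_pow]
    _ = ∏ s : SS n, ∏ _c : Fin (p-1), blk 𝔽 s := by
        refine Finset.prod_congr rfl fun s _ => ?_
        rw [Finset.prod_const, Finset.card_univ, Fintype.card_fin]
    _ = ∏ t : SS n × Fin (p-1), blk 𝔽 t.1 := by rw [← Fintype.prod_prod_type']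
    _ = ∑ τ : PT n p, monomial (Exp p τ) (sgn 𝔽 p τ) := by
        have hdet : ∀ t : SS n × Fin (p-1), blk 𝔽 t.1 =
            ∑ σ : Equiv.Perm (Fin (len t.1)),
              monomial (∑ i, Finsupp.single
                  (fincl n (off t.1) (len t.1) (off_len_le t.1) (σ i),
                   fincl n (off t.1) (len t.1) (off_len_le t.1) i) 1)
                (((Equiv.Perm.sign σ : ℤ) : 𝔽)) := fun t => det_X _
        rw [Finset.prod_congr rfl fun t _ => hdet t]
        rw [Finset.prod_univ_sum]
        rw [Fintype.piFinset_univ]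
        refine Finset.sum_congr rfl fun τ _ => ?_
        rw [prod_monomial]
        rfl

/-! ### Pointwise values of the exponent -/

noncomputable def Fmap {n p : ℕ} (τ : PT n p) (s : SS n) (c : Fin (p-1)) (v : ℕ) : ℕ :=
  if h : off s ≤ v ∧ v < off s + len s then
    off s + ((τ (s,c)) ⟨v - off s, by show v - off s < len s; omega⟩ : ℕ)
  else n

lemma Exp_apply {n p : ℕ} (τ : PT n p) (u v : Fin n) :
    Exp p τ (u, v) = ∑ s : SS n, ∑ c : Fin (p-1),
      if off s ≤ (v:ℕ) ∧ (v:ℕ) < off s + len s ∧ Fmap τ s c v = (u:ℕ) then 1 else 0 := by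
  classical
  rw [Exp_eq, Finsupp.finset_sum_apply]
  refine Finset.sum_congr rfl fun s _ => ?_
  rw [Finsupp.finset_sum_apply]
  refine Finset.sum_congr rfl fun c _ => ?_
  rw [Finsupp.finset_sum_apply]
  by_cases hv : off s ≤ (v:ℕ) ∧ (v:ℕ) < off s + len s
  · have hlenpos : (v:ℕ) - off s < len s := by omega
    rw [Finset.sum_eq_single (⟨(v:ℕ) - off s, hlenpos⟩ : Fin (len s))]
    · rw [Finsupp.single_apply, Fmap, dif_pos hv]
      have hfv : fincl n (off s) (len s) (off_len_le s) ⟨(v:ℕ) - off s, hlenpos⟩ = v := by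
        apply Fin.ext
        show off s + ((v:ℕ) - off s) = (v:ℕ)
        omega
      rw [hfv]
      by_cases hu : fincl n (off s) (len s) (off_len_le s)
          ((τ (s,c)) ⟨(v:ℕ) - off s, hlenpos⟩) = u
      · rw [if_pos (by rw [hu]), if_pos]
        refine ⟨hv.1, hv.2, ?_⟩
        rw [← hu]; rfl
      · rw [if_neg (by intro hc; exact hu (by rw [Prod.ext_iff] at hc; exact hc.1)), if_neg]
        rintro ⟨-, -, hFu⟩
        apply hu
        apply Fin.ext
        rw [fincl_val, hFu]
    · intro i _ hne
      rw [Finsupp.single_apply, if_neg]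
      intro hc
      rw [Prod.ext_iff] at hc
      apply hne
      apply Fin.ext
      have h2 := hc.2
      rw [Fin.ext_iff] at h2
      rw [fincl_val] at h2
      have h3 : off s + (i:ℕ) = (v:ℕ) := h2
      show (i : ℕ) = (v:ℕ) - off s
      omega
    · intro h; exact absurd (mem_univ _) h
  · rw [if_neg (by tauto)]
    refine Finset.sum_eq_zero fun i _ => ?_
    rw [Finsupp.single_apply, if_neg]
    intro hc
    rw [Prod.ext_iff] at hc
    have h2 := hc.2
    rw [Fin.ext_iff] at h2
    rw [fincl_val] at h2
    have h3 : off s + (i:ℕ) = (v:ℕ) := h2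
    have := i.isLt
    omega

lemma Exp_total {n p : ℕ} (τ : PT n p) :
    (∑ ij : Fin n × Fin n, Exp p τ ij) = (p - 1) * (n * n) := by
  classical
  have h1 : ∀ ij : Fin n × Fin n, Exp p τ ij
      = ∑ s : SS n, ∑ c : Fin (p-1), ∑ i : Fin (len s),
          (Finsupp.single (fincl n (off s) (len s) (off_len_le s) ((τ (s,c)) i),
                    fincl n (off s) (len s) (off_len_le s) i) 1) ij := by
    intro ij
    rw [Exp_eq, Finsupp.finset_sum_apply]
    refine Finset.sum_congr rfl fun s _ => ?_
    rw [Finsupp.finset_sum_apply]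
    exact Finset.sum_congr rfl fun c _ => by rw [Finsupp.finset_sum_apply]
  calc (∑ ij : Fin n × Fin n, Exp p τ ij)
      = ∑ s : SS n, ∑ c : Fin (p-1), ∑ i : Fin (len s), ∑ ij : Fin n × Fin n,
          (Finsupp.single (fincl n (off s) (len s) (off_len_le s) ((τ (s,c)) i),
                    fincl n (off s) (len s) (off_len_le s) i) 1) ij := by
        rw [Finset.sum_congr rfl fun ij _ => h1 ij]
        rw [Finset.sum_comm]
        refine Finset.sum_congr rfl fun s _ => ?_
        rw [Finset.sum_comm]
        exact Finset.sum_congr rfl fun c _ => Finset.sum_comm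
    _ = ∑ s : SS n, ∑ _c : Fin (p-1), ∑ _i : Fin (len s), 1 := by
        refine Finset.sum_congr rfl fun s _ => Finset.sum_congr rfl fun c _ =>
          Finset.sum_congr rfl fun i _ => ?_
        simp [Finsupp.single_apply]
    _ = ∑ s : SS n, ∑ _c : Fin (p-1), len s := by simp
    _ = (p - 1) * (n * n) := by
        simp only [Finset.sum_const, Finset.card_univ, Fintype.card_fin, smul_eq_mul]
        rw [← Finset.mul_sum, sumlen n]

/-! ### The uniqueness claim -/

lemma claimA {n p : ℕ} (hp : p.Prime) (τ : PT n p)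
    (hdvd : ∀ ij : Fin n × Fin n, p ∣ Exp p τ ij + 1) :
    τ = fun _ => Fin.revPerm := by
  classical
  have hge : ∀ ij : Fin n × Fin n, p - 1 ≤ Exp p τ ij := by
    intro ij
    have h := Nat.le_of_dvd (Nat.succ_pos _) (hdvd ij)
    omega
  have htot := Exp_total τ
  have hall : ∀ ij : Fin n × Fin n, Exp p τ ij = p - 1 := by
    by_contra hne
    push_neg at hne
    obtain ⟨ij₀, hij₀⟩ := hne
    have hlt : p - 1 < Exp p τ ij₀ := lt_of_le_of_ne (hge ij₀) (Ne.symm hij₀)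
    have hs := Finset.sum_lt_sum (fun ij (_ : ij ∈ Finset.univ) => hge ij)
      ⟨ij₀, Finset.mem_univ _, hlt⟩
    rw [htot] at hs
    simp only [Finset.sum_const, Finset.card_univ, Fintype.card_prod, Fintype.card_fin,
      smul_eq_mul] at hs
    rw [mul_comm] at hs
    exact lt_irrefl _ hs
  have hmaps : ∀ (s : SS n) (c : Fin (p-1)) (v : ℕ), off s ≤ v → v < off s + len s →
      off s ≤ Fmap τ s c v ∧ Fmap τ s c v < off s + len s := by
    intro s c v h1 h2
    rw [Fmap, dif_pos ⟨h1, h2⟩]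
    have hlt : (((τ (s,c)) ⟨v - off s, by show v - off s < len s; omega⟩ : Fin (len s))) < len s :=
      ((τ (s,c)) ⟨v - off s, by show v - off s < len s; omega⟩).isLt
    constructor
    · exact Nat.le_add_right _ _
    · omega
  have hinj : ∀ (s : SS n) (c : Fin (p-1)) (v w : ℕ), off s ≤ v → v < off s + len s →
      off s ≤ w → w < off s + len s → Fmap τ s c v = Fmap τ s c w → v = w := by
    intro s c v w h1 h2 h3 h4 heq
    rw [Fmap, dif_pos ⟨h1, h2⟩, Fmap, dif_pos ⟨h3, h4⟩] at heq
    have hval : (((τ (s,c)) ⟨v - off s, by show v - off s < len s; omega⟩) : ℕ)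
        = (((τ (s,c)) ⟨w - off s, by show w - off s < len s; omega⟩) : ℕ) := by omega
    have h5 := (τ (s,c)).injective (Fin.ext hval)
    have h6 : v - off s = w - off s := congrArg Fin.val h5
    omega
  have hcount : ∀ u v : ℕ, u < n → v < n →
      (∑ s : SS n, ∑ c : Fin (p-1),
        if off s ≤ v ∧ v < off s + len s ∧ Fmap τ s c v = u then 1 else 0)
      = Fintype.card (Fin (p-1)) := by
    intro u v hu hv
    have h := Exp_apply τ ⟨u, hu⟩ ⟨v, hv⟩
    rw [hall (⟨u, hu⟩, ⟨v, hv⟩)] at h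
    rw [Fintype.card_fin]
    exact h.symm
  have hF := comb off len off_len_le (star n) (Fmap τ) hmaps hinj hcount
  funext t
  obtain ⟨s, c⟩ := t
  apply Equiv.ext
  intro i
  apply Fin.ext
  have hilt : (i:ℕ) < len s := i.isLt
  have hin1 : off s ≤ off s + (i:ℕ) := Nat.le_add_right _ _
  have hin2 : off s + (i:ℕ) < off s + len s := by omega
  have h := hF s c (off s + (i:ℕ)) hin1 hin2
  rw [Fmap, dif_pos ⟨hin1, hin2⟩] at h
  have hidx : (⟨off s + (i:ℕ) - off s, by show off s + (i:ℕ) - off s < len s; omega⟩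
      : Fin (len s)) = i := by
    apply Fin.ext
    show off s + (i:ℕ) - off s = (i:ℕ)
    omega
  rw [hidx] at h
  have hrev : ((Fin.revPerm i : Fin (len s)) : ℕ) = len s - ((i:ℕ) + 1) := by
    simp
  rw [hrev]
  omega

lemma Exp_rev {n : ℕ} (p : ℕ) (ij : Fin n × Fin n) :
    Exp p (fun _ => Fin.revPerm : PT n p) ij = p - 1 := by
  classical
  obtain ⟨u, v⟩ := ij
  rw [Exp_apply]
  have hcond : ∀ (s : SS n) (c : Fin (p-1)),
      (off s ≤ (v:ℕ) ∧ (v:ℕ) < off s + len s ∧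
        Fmap (fun _ => Fin.revPerm : PT n p) s c (v:ℕ) = (u:ℕ))
      ↔ (off s ≤ (u:ℕ) ∧ (u:ℕ) < off s + len s ∧ off s ≤ (v:ℕ) ∧ (v:ℕ) < off s + len s ∧
          2 * off s + len s = (u:ℕ) + (v:ℕ) + 1) := by
    intro s c
    constructor
    · rintro ⟨h1, h2, h3⟩
      rw [Fmap, dif_pos ⟨h1, h2⟩] at h3
      have hval : ((Fin.revPerm (⟨(v:ℕ) - off s, by show (v:ℕ) - off s < len s; omega⟩
          : Fin (len s))) : ℕ) = len s - ((v:ℕ) - off s + 1) := by simp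
      rw [hval] at h3
      omega
    · rintro ⟨h1, h2, h3, h4, h5⟩
      refine ⟨h3, h4, ?_⟩
      rw [Fmap, dif_pos ⟨h3, h4⟩]
      have hval : ((Fin.revPerm (⟨(v:ℕ) - off s, by show (v:ℕ) - off s < len s; omega⟩
          : Fin (len s))) : ℕ) = len s - ((v:ℕ) - off s + 1) := by simp
      rw [hval]
      omega
  calc (∑ s : SS n, ∑ c : Fin (p-1),
        if off s ≤ (v:ℕ) ∧ (v:ℕ) < off s + len s ∧
          Fmap (fun _ => Fin.revPerm : PT n p) s c (v:ℕ) = (u:ℕ) then 1 else 0)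
      = ∑ s : SS n, ∑ _c : Fin (p-1),
          if (off s ≤ (u:ℕ) ∧ (u:ℕ) < off s + len s ∧ off s ≤ (v:ℕ) ∧ (v:ℕ) < off s + len s ∧
            2 * off s + len s = (u:ℕ) + (v:ℕ) + 1) then 1 else 0 :=
        Finset.sum_congr rfl fun s _ => Finset.sum_congr rfl fun c _ =>
          if_congr (hcond s c) rfl rfl
    _ = ∑ s : SS n,
          (p - 1) * if (off s ≤ (u:ℕ) ∧ (u:ℕ) < off s + len s ∧ off s ≤ (v:ℕ) ∧
            (v:ℕ) < off s + len s ∧ 2 * off s + len s = (u:ℕ) + (v:ℕ) + 1) then 1 else 0 := by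
        refine Finset.sum_congr rfl fun s _ => ?_
        rw [Finset.sum_const, Finset.card_univ, Fintype.card_fin, smul_eq_mul]
    _ = p - 1 := by
        obtain ⟨s₀, h₀, hu₀⟩ := star n u v u.isLt v.isLt
        rw [Finset.sum_eq_single_of_mem s₀ (Finset.mem_univ _)]
        · rw [if_pos h₀, mul_one]
        · intro s' _ hne
          rw [if_neg, mul_zero]
          intro hc
          exact hne (hu₀ s' hc)

lemma sgn_rev {𝔽 : Type*} [Field 𝔽] {n : ℕ} (p : ℕ) (hp : p.Prime) [CharP 𝔽 p] :
    sgn 𝔽 p (fun _ => Fin.revPerm : PT n p) = 1 := by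
  have hpow : ∀ x : 𝔽, x = 1 ∨ x = -1 → x ^ (p - 1) = 1 := by
    rintro x (rfl | rfl)
    · exact one_pow _
    · rcases hp.eq_two_or_odd' with h2 | hodd
      · subst h2
        have hneg : (-1 : 𝔽) = 1 := by
          have := CharTwo.neg_eq (R := 𝔽) 1
          simpa using this
        rw [hneg, one_pow]
      · exact Even.neg_one_pow (Nat.Odd.sub_odd hodd odd_one)
  rw [sgn, Fintype.prod_prod_type]
  have h1 : ∀ s : SS n, (∏ _c : Fin (p-1),
      ((Equiv.Perm.sign (Fin.revPerm : Equiv.Perm (Fin (len s))) : ℤ) : 𝔽)) = 1 := by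
    intro s
    rw [Finset.prod_const, Finset.card_univ, Fintype.card_fin]
    refine hpow _ ?_
    rcases Int.units_eq_one_or (Equiv.Perm.sign (Fin.revPerm : Equiv.Perm (Fin (len s))))
      with h | h <;> rw [h] <;> simp
  rw [Finset.prod_congr rfl fun s _ => h1 s, Finset.prod_const, one_pow]

/-! ### The main computation -/

theorem sigma_one {𝔽 : Type*} [Field 𝔽] (p : ℕ) (hp : p.Prime) [CharP 𝔽 p] (n : ℕ)
    (σ₀ : MvPolynomial (Fin n × Fin n) 𝔽 → MvPolynomial (Fin n × Fin n) 𝔽)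
    (h0add : ∀ a b, σ₀ (a + b) = σ₀ a + σ₀ b)
    (h0tw : ∀ a b, σ₀ (a ^ p * b) = a * σ₀ b)
    (h0val : ∀ m : Fin n × Fin n →₀ ℕ,
      σ₀ (monomial m 1) =
        if ∀ ij, p ∣ m ij + 1 then
          monomial (m.mapRange (fun k => (k + 1) / p - 1)
            (Nat.sub_eq_zero_of_le (Nat.div_le_self _ _))) 1
        else 0) :
    σ₀ ((∏ s : SS n, blk 𝔽 s) ^ (p - 1)) = 1 := by
  classical
  have hzero : σ₀ 0 = 0 := by
    have h := h0add 0 0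
    rw [add_zero] at h
    exact (left_eq_add.mp h)
  have hsum : ∀ (s : Finset (PT n p)) (g : PT n p → MvPolynomial (Fin n × Fin n) 𝔽),
      σ₀ (∑ x ∈ s, g x) = ∑ x ∈ s, σ₀ (g x) := by
    intro s g
    induction s using Finset.cons_induction with
    | empty => simpa using hzero
    | cons a s ha ih => rw [Finset.sum_cons, h0add, ih, Finset.sum_cons]
  have hpm : ∀ τ : PT n p, sgn 𝔽 p τ = 1 ∨ sgn 𝔽 p τ = -1 := by
    intro τ
    rw [sgn]
    refine Finset.prod_induction _ (fun x => x = 1 ∨ x = -1) ?_ (Or.inl rfl) ?_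
    · rintro a b (rfl|rfl) (rfl|rfl) <;> simp
    · intro t _
      rcases Int.units_eq_one_or (Equiv.Perm.sign (τ t)) with h | h <;> rw [h] <;> simp
  have hCmul : ∀ (ε : 𝔽), ε = 1 ∨ ε = -1 → ∀ g, σ₀ (C ε * g) = C ε * σ₀ g := by
    intro ε hε g
    have hεp : ε ^ p = ε := by
      rcases hε with rfl | rfl
      · exact one_pow _
      · rcases hp.eq_two_or_odd' with h2 | hodd
        · subst h2
          have hneg : (-1 : 𝔽) = 1 := by
            have := CharTwo.neg_eq (R := 𝔽) 1
            simpa using this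
          rw [hneg, one_pow]
        · exact hodd.neg_one_pow
    calc σ₀ (C ε * g) = σ₀ ((C ε) ^ p * g) := by rw [← map_pow, hεp]
      _ = C ε * σ₀ g := h0tw _ _
  have hothers : ∀ τ ∈ (Finset.univ : Finset (PT n p)),
      τ ≠ (fun _ => Fin.revPerm : PT n p) → σ₀ (monomial (Exp p τ) (sgn 𝔽 p τ)) = 0 := by
    intro τ _ hne
    have h1 : monomial (Exp p τ) (sgn 𝔽 p τ) = C (sgn 𝔽 p τ) * monomial (Exp p τ) 1 := by
      rw [C_mul_monomial, mul_one]
    rw [h1, hCmul _ (hpm τ), h0val, if_neg, mul_zero]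
    intro hcond
    exact hne (claimA hp τ hcond)
  rw [expand, hsum, Finset.sum_eq_single_of_mem _ (Finset.mem_univ _) hothers]
  rw [sgn_rev p hp, h0val, if_pos]
  · have hmr : (Exp p (fun _ => Fin.revPerm : PT n p)).mapRange (fun k => (k + 1) / p - 1)
        (Nat.sub_eq_zero_of_le (Nat.div_le_self _ _)) = 0 := by
      ext ij
      rw [Finsupp.mapRange_apply, Exp_rev]
      have h1 : p - 1 + 1 = p := by have := hp.one_lt; omega
      rw [h1, Nat.div_self hp.pos]
      simp
    rw [hmr]
    simp [monomial_zero']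
  · intro ij
    rw [Exp_rev]
    have := hp.one_lt
    exact ⟨1, by omega⟩

/-! ### Identification with the product of minors -/

lemma blk_inl {𝔽 : Type*} [Field 𝔽] {n : ℕ} (k : Fin n) :
    blk 𝔽 (Sum.inl k : SS n) =
      Matrix.det (Matrix.of fun i j : Fin ((k : ℕ) + 1) =>
        X (Fin.castLE k.isLt i, Fin.castLE k.isLt j)) := by
  rw [blk]
  have h1 : ∀ i : Fin (len (Sum.inl k : SS n)),
      fincl n (off (Sum.inl k : SS n)) (len (Sum.inl k : SS n)) (off_len_le _) i
        = Fin.castLE k.isLt i := fun i => Fin.ext (by show 0 + (i:ℕ) = (i:ℕ); omega)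
  congr 1
  ext i j
  simp only [Matrix.of_apply]
  rw [h1 i, h1 j]
  rfl

lemma blk_inr {𝔽 : Type*} [Field 𝔽] {n : ℕ} (k : Fin (n - 1)) :
    blk 𝔽 (Sum.inr k : SS n) =
      Matrix.det (Matrix.of fun i j : Fin ((k : ℕ) + 1) =>
        (X (⟨n - ((k : ℕ) + 1) + (i : ℕ), by have := k.isLt; have := i.isLt; omega⟩,
            ⟨n - ((k : ℕ) + 1) + (j : ℕ), by have := k.isLt; have := j.isLt; omega⟩)
          : MvPolynomial (Fin n × Fin n) 𝔽)) := rfl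

lemma f_eq {𝔽 : Type*} [Field 𝔽] (n : ℕ) :
    ((∏ k : Fin n, Matrix.det (Matrix.of fun i j : Fin ((k : ℕ) + 1) =>
        X (Fin.castLE k.isLt i, Fin.castLE k.isLt j))) *
      ∏ k : Fin (n-1), Matrix.det (Matrix.of fun i j : Fin ((k : ℕ) + 1) =>
        (X (⟨n - ((k : ℕ) + 1) + (i : ℕ), by have := k.isLt; have := i.isLt; omega⟩,
            ⟨n - ((k : ℕ) + 1) + (j : ℕ), by have := k.isLt; have := j.isLt; omega⟩)
          : MvPolynomial (Fin n × Fin n) 𝔽)))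
    = ∏ s : SS n, blk 𝔽 s := by
  rw [Fintype.prod_sum_type]
  exact congrArg₂ (· * ·)
    (Finset.prod_congr rfl fun k _ => (blk_inl k).symm)
    (Finset.prod_congr rfl fun k _ => (blk_inr k).symm)

end Stmt18Aux

open MvPolynomial

/-- Splitting of the space of `n × n` matrices compatible with the determinant divisor:
in `A = 𝔽[x_{ij}]`, let `f` be the product of all leading principal minors (sizes
`1, …, n`) and all trailing principal minors (sizes `1, …, n-1`) of the generic matrix.
Then `f^(p-1) ∗ σ₀ : g ↦ σ₀ (f^(p-1) * g)` is a Frobenius splitting of `A` compatible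
with the ideal generated by the determinant. -/
theorem stmt_18 {𝔽 : Type*} [Field 𝔽] (p : ℕ) (hp : p.Prime)
    [CharP 𝔽 p] [ExpChar 𝔽 p] [PerfectRing 𝔽 p] (n : ℕ)
    (σ₀ : MvPolynomial (Fin n × Fin n) 𝔽 → MvPolynomial (Fin n × Fin n) 𝔽)
    (h0add : ∀ a b, σ₀ (a + b) = σ₀ a + σ₀ b)
    (h0tw : ∀ a b, σ₀ (a ^ p * b) = a * σ₀ b)
    (h0val : ∀ m : Fin n × Fin n →₀ ℕ,
      σ₀ (monomial m 1) =
        if ∀ ij, p ∣ m ij + 1 then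
          monomial (m.mapRange (fun k => (k + 1) / p - 1)
            (by simp [Nat.div_eq_of_lt hp.one_lt])) 1
        else 0) :
    let lead : ∀ k : Fin n, MvPolynomial (Fin n × Fin n) 𝔽 := fun k =>
      Matrix.det (Matrix.of fun i j : Fin ((k : ℕ) + 1) =>
        X (Fin.castLE k.isLt i, Fin.castLE k.isLt j))
    let trail : ∀ k : Fin (n - 1), MvPolynomial (Fin n × Fin n) 𝔽 := fun k =>
      Matrix.det (Matrix.of fun i j : Fin ((k : ℕ) + 1) =>
        X (⟨n - ((k : ℕ) + 1) + (i : ℕ), by have := i.isLt; have := k.isLt; omega⟩,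
           ⟨n - ((k : ℕ) + 1) + (j : ℕ), by have := j.isLt; have := k.isLt; omega⟩))
    let f : MvPolynomial (Fin n × Fin n) 𝔽 := (∏ k, lead k) * ∏ k, trail k
    let det : MvPolynomial (Fin n × Fin n) 𝔽 :=
      Matrix.det (Matrix.of fun i j : Fin n => X (i, j))
    let σ : MvPolynomial (Fin n × Fin n) 𝔽 → MvPolynomial (Fin n × Fin n) 𝔽 :=
      fun g => σ₀ (f ^ (p - 1) * g)
    (∀ a b, σ (a + b) = σ a + σ b) ∧
    (∀ a b, σ (a ^ p * b) = a * σ b) ∧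
    σ 1 = 1 ∧
    (∀ g ∈ Ideal.span {det}, σ g ∈ Ideal.span {det}) := by
  intro lead trail f det σ
  refine ⟨?_, ?_, ?_, ?_⟩
  · intro a b
    show σ₀ (f ^ (p - 1) * (a + b)) = σ₀ (f ^ (p - 1) * a) + σ₀ (f ^ (p - 1) * b)
    rw [mul_add]
    exact h0add _ _
  · intro a b
    show σ₀ (f ^ (p - 1) * (a ^ p * b)) = a * σ₀ (f ^ (p - 1) * b)
    rw [show f ^ (p - 1) * (a ^ p * b) = a ^ p * (f ^ (p - 1) * b) by ring]
    exact h0tw _ _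
  · show σ₀ (f ^ (p - 1) * 1) = 1
    rw [mul_one]
    have hf : f = ∏ s : Stmt18Aux.SS n, Stmt18Aux.blk 𝔽 s := Stmt18Aux.f_eq n
    rw [hf]
    exact Stmt18Aux.sigma_one p hp n σ₀ h0add h0tw h0val
  · intro g hg
    rw [Ideal.mem_span_singleton] at hg ⊢
    obtain ⟨h, rfl⟩ := hg
    have hdvd : det ∣ f := by
      rcases Nat.eq_zero_or_pos n with hn | hn
      · subst hn
        have hdet1 : det = 1 := Matrix.det_fin_zero
        rw [hdet1]
        exact one_dvd _
      · obtain ⟨m, rfl⟩ : ∃ m, n = m + 1 := ⟨n - 1, by omega⟩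
        have hlead : det = lead (Fin.last m) := rfl
        have h1 : lead (Fin.last m) ∣ ∏ k, lead k :=
          Finset.dvd_prod_of_mem _ (Finset.mem_univ _)
        rw [hlead]
        exact h1.trans (dvd_mul_right _ _)
    obtain ⟨f', hf'⟩ := hdvd
    show det ∣ σ₀ (f ^ (p - 1) * (det * h))
    have hp1 : p - 1 + 1 = p := Nat.succ_pred_eq_of_pos hp.pos
    have hrw : f ^ (p - 1) * (det * h) = det ^ p * (f' ^ (p - 1) * h) := by
      rw [hf', mul_pow]
      rw [show det ^ (p-1) * f' ^ (p-1) * (det * h)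
        = det ^ (p-1) * det * (f' ^ (p-1) * h) by ring]
      rw [← pow_succ, hp1]
    rw [hrw, h0tw]
    exact Dvd.intro _ rfl
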